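/- Let M ∈ SL(n, ℚ_p) and let M = N·A·K be any Iwasawa decomposition (N unit upper triangular, A diagonal with det A = 1, K ∈ SL(n, ℤ_p)). Parameterize A by dilatons y₁,…,y_{n−1} via A_{ii} = y_i / y_{i−1} with y₀ = y_n = 1. Then for each k ∈ {1,…,n−1}, |y_{n−k}|_p = ( max over all k-element subsets σ(1) < … < σ(k) of {1,…,n} of |M(n−k+1, …, n | σ(1), …, σ(k))|_p )^{−1}, i.e., the p-adic norm of y_{n−k} is the inverse of the maximal p-adic norm of an anti-leading minor of order k of M. -/

import Mathlib

open Matrix in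
theorem aux_cols {F : Type*} [Field F] {k n : ℕ}
    (R : Matrix (Fin k) (Fin n) F) (hli : LinearIndependent F (fun i => R i)) :
    ∃ σ : Fin k → Fin n, StrictMono σ ∧ (R.submatrix id σ).det ≠ 0 := by
  classical
  have hrankT : Rᵀ.rank = k := by
    rw [Matrix.rank_eq_finrank_span_cols]
    show Module.finrank F (Submodule.span F (Set.range (fun i => R i))) = k
    simpa using finrank_span_eq_card hli
  have hrank : R.rank = k := by rw [← Matrix.rank_transpose]; exact hrankT
  have hspan : Submodule.span F (Set.range Rᵀ) = ⊤ := by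
    apply Submodule.eq_top_of_finrank_eq
    rw [show Set.range Rᵀ = Set.range R.col from rfl, ← Matrix.rank_eq_finrank_span_cols, hrank, Module.finrank_fintype_fun_eq_card,
      Fintype.card_fin]
  obtain ⟨b, hbsub, hbspan, hbind⟩ := exists_linearIndependent F (Set.range Rᵀ)
  rw [hspan] at hbspan
  have hbfin : b.Finite := hbind.set_finite_of_isNoetherian
  haveI := hbfin.fintype
  let B : Module.Basis b F (Fin k → F) := Module.Basis.mk hbind (by rw [Subtype.range_coe]; exact hbspan.ge)
  have hcardb : Fintype.card b = k := by
    have h := Module.finrank_eq_card_basis B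
    rw [Module.finrank_fintype_fun_eq_card, Fintype.card_fin] at h; exact h.symm
  have hchoose : ∀ x : b, ∃ j : Fin n, Rᵀ j = (x : Fin k → F) := fun x => hbsub x.2
  choose φ hφ using hchoose
  have hφinj : Function.Injective φ := fun x x' h =>
    Subtype.ext (by rw [← hφ x, ← hφ x', h])
  let s : Finset (Fin n) := Finset.univ.image φ
  have hs : s.card = k := by
    rw [Finset.card_image_of_injective _ hφinj, Finset.card_univ, hcardb]
  let e := s.orderIsoOfFin hs
  refine ⟨fun i => (e i : Fin n), fun i j hij => Subtype.coe_lt_coe.mpr (e.strictMono hij), ?_⟩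
  have hmem : ∀ i : Fin k, ∃ x : b, φ x = (e i : Fin n) := by
    intro i
    have h1 : (e i : Fin n) ∈ s := (e i).2
    obtain ⟨x, -, hx⟩ := Finset.mem_image.mp h1
    exact ⟨x, hx⟩
  choose g hg using hmem
  have hcol : ∀ i, Rᵀ (e i : Fin n) = (g i : Fin k → F) := fun i => by rw [← hg i, hφ]
  have hginj : Function.Injective g := by
    intro i j hij
    have h2 : (e i : Fin n) = (e j : Fin n) := by rw [← hg i, ← hg j, hij]
    exact e.injective (Subtype.ext h2)
  have hind : LinearIndependent F (fun i : Fin k => Rᵀ (e i : Fin n)) := by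
    have h3 := hbind.comp g hginj
    have h4 : (fun i : Fin k => Rᵀ (e i : Fin n)) = (fun x : b => (x : Fin k → F)) ∘ g := by
      funext i; simp [hcol i, Function.comp]
    rw [h4]; exact h3
  have hind2 : LinearIndependent F (fun i => (R.submatrix id (fun i => (e i : Fin n)))ᵀ i) := by
    convert hind using 1
    rfl
  have hunit := Matrix.linearIndependent_cols_iff_isUnit.mp hind2
  intro hdet
  have := (Matrix.isUnit_iff_isUnit_det _).mp hunit
  rw [hdet] at this
  exact not_isUnit_zero this

open Matrix in
theorem aux_K {p : ℕ} [Fact p.Prime] {k n : ℕ}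
    (K : Matrix (Fin n) (Fin n) ℚ_[p]) (hK : ∀ i j, ‖K i j‖ ≤ 1) (hKdet : K.det = 1)
    (r : Fin k → Fin n) (hr : StrictMono r) :
    (∀ σ : Fin k → Fin n, ‖(K.submatrix r σ).det‖ ≤ 1) ∧
    ∃ σ : Fin k → Fin n, StrictMono σ ∧ ‖(K.submatrix r σ).det‖ = 1 := by
  classical
  set K' : Matrix (Fin n) (Fin n) ℤ_[p] := fun i j => ⟨K i j, hK i j⟩ with hK'def
  have hsub : ∀ σ : Fin k → Fin n,
      (K.submatrix r σ).det = ((K'.submatrix r σ).det : ℚ_[p]) := by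
    intro σ
    have h1 : K.submatrix r σ = (K'.submatrix r σ).map (PadicInt.Coe.ringHom (p := p)) := by
      ext i j; rfl
    have h2 := RingHom.map_det (PadicInt.Coe.ringHom (p := p)) (K'.submatrix r σ)
    rw [RingHom.mapMatrix_apply] at h2
    rw [h1, ← h2]; rfl
  have hle : ∀ σ : Fin k → Fin n, ‖(K.submatrix r σ).det‖ ≤ 1 := by
    intro σ
    rw [hsub σ, ← PadicInt.norm_def]
    exact PadicInt.norm_le_one _
  refine ⟨hle, ?_⟩
  have hdetK' : K'.det = 1 := by
    have hmap : K = K'.map (PadicInt.Coe.ringHom (p := p)) := by ext i j; rfl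
    have h2 := RingHom.map_det (PadicInt.Coe.ringHom (p := p)) K'
    rw [RingHom.mapMatrix_apply] at h2
    have h1 : ((K'.det : ℤ_[p]) : ℚ_[p]) = 1 := by
      show PadicInt.Coe.ringHom K'.det = 1
      rw [h2, ← hmap, hKdet]
    exact Subtype.ext h1
  set Kbar := K'.map (PadicInt.toZMod) with hKbar
  have hdetbar : Kbar.det = 1 := by
    have h2 := RingHom.map_det (PadicInt.toZMod (p := p)) K'
    rw [RingHom.mapMatrix_apply] at h2
    rw [hKbar, ← h2, hdetK', _root_.map_one]
  have hunit : IsUnit Kbar := (Matrix.isUnit_iff_isUnit_det _).mpr (by rw [hdetbar]; exact isUnit_one)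
  have hrows : LinearIndependent (ZMod p) (fun i => Kbar i) :=
    Matrix.linearIndependent_rows_iff_isUnit.mpr hunit
  have hsubrows : LinearIndependent (ZMod p) (fun i : Fin k => (Kbar.submatrix r id) i) :=
    hrows.comp r hr.injective
  obtain ⟨σ, hσmono, hσdet⟩ := aux_cols (Kbar.submatrix r id) hsubrows
  have h2 : (Kbar.submatrix r σ).det ≠ 0 := by
    simpa [Matrix.submatrix_submatrix] using hσdet
  have h3 : PadicInt.toZMod ((K'.submatrix r σ).det) ≠ 0 := by
    have h6 := RingHom.map_det (PadicInt.toZMod (p := p)) (K'.submatrix r σ)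
    rw [RingHom.mapMatrix_apply] at h6
    rw [h6]
    exact h2
  have h4 : IsUnit ((K'.submatrix r σ).det) := by
    by_contra h
    have h5 : (K'.submatrix r σ).det ∈ IsLocalRing.maximalIdeal ℤ_[p] := by
      rwa [IsLocalRing.mem_maximalIdeal, mem_nonunits_iff]
    rw [← PadicInt.ker_toZMod, RingHom.mem_ker] at h5
    exact h3 h5
  refine ⟨σ, hσmono, ?_⟩
  rw [hsub σ, ← PadicInt.norm_def]
  exact PadicInt.isUnit_iff.mp h4

theorem aux_tel {F : Type*} [Field F] (y : ℕ → F) (a : ℕ) :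
    ∀ m : ℕ, (∀ j, a ≤ j → j ≤ a + m → y j ≠ 0) →
    ∏ i ∈ Finset.range m, (y (a + i + 1) / y (a + i)) = y (a + m) / y a := by
  intro m
  induction m with
  | zero => intro h; simp [div_self (h a le_rfl (by omega))]
  | succ m ih =>
    intro h
    rw [Finset.prod_range_succ, ih (fun j hj1 hj2 => h j hj1 (by omega))]
    have h1 : y (a + m) ≠ 0 := h _ (by omega) (by omega)
    rw [div_mul_div_comm, mul_comm (y a) (y (a + m)), mul_div_mul_left _ _ h1]
    ring_nf

open Finset in
theorem stmt_aux (p : ℕ) [Fact p.Prime] (n : ℕ)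
    (M N A K : Matrix (Fin n) (Fin n) ℚ_[p])
    (hdec : M = N * A * K)
    (hNd : ∀ i, N i i = 1) (hN0 : ∀ i j : Fin n, j < i → N i j = 0)
    (hA : ∀ i j : Fin n, i ≠ j → A i j = 0) (hAdet : A.det = 1)
    (hK : ∀ i j, ‖K i j‖ ≤ 1) (hKdet : K.det = 1)
    (y : ℕ → ℚ_[p]) (hy0 : y 0 = 1) (hyn : y n = 1)
    (hAy : ∀ i : Fin n, A i i = y (i.1 + 1) / y i.1)
    (k : ℕ) (hk1 : 1 ≤ k) (hk2 : k ≤ n - 1)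
    (r : Fin k → Fin n) (hrval : ∀ i : Fin k, (r i).1 = n - k + i.1) :
    ‖y (n - k)‖₊ =
      ((Finset.univ.filter fun σ : Fin k → Fin n =>
          ∀ a b : Fin k, a < b → σ a < σ b).sup fun σ =>
        ‖(M.submatrix r σ).det‖₊)⁻¹ := by
  classical
  have hkn : k + 1 ≤ n := by omega
  have hrmono : StrictMono r := by
    intro i j hij
    rw [Fin.lt_def, hrval i, hrval j]
    have := Fin.lt_def.mp hij
    omega
  -- A is diagonal with nonzero entries
  have hAdiag : A = Matrix.diagonal (fun i => A i i) := by
    ext i j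
    by_cases h : i = j
    · subst h; simp
    · rw [hA i j h, Matrix.diagonal_apply_ne _ h]
  have hAprod : (∏ i, A i i) = 1 := by
    rw [← Matrix.det_diagonal, ← hAdiag, hAdet]
  have hAne : ∀ i, A i i ≠ 0 := by
    intro i h
    have h1 := Finset.prod_eq_zero (f := fun i => A i i) (Finset.mem_univ i) h
    rw [hAprod] at h1
    exact one_ne_zero h1
  have hyne : ∀ j, j ≤ n → y j ≠ 0 := by
    intro j hj
    cases j with
    | zero => rw [hy0]; exact one_ne_zero
    | succ m =>
      intro h0
      have hi : m < n := by omega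
      have h1 := hAy ⟨m, hi⟩
      simp only [Fin.val_mk] at h1
      rw [h0, zero_div] at h1
      exact hAne _ h1
  -- factorization of minors
  have hAK : ∀ (l j : Fin n), (A * K) l j = A l l * K l j := by
    intro l j
    rw [Matrix.mul_apply]
    exact Fintype.sum_eq_single l (fun m hm => by rw [hA l m (Ne.symm hm), zero_mul])
  have hfact : ∀ σ : Fin k → Fin n,
      (M.submatrix r σ).det = (1 / y (n - k)) * (K.submatrix r σ).det := by
    intro σ
    have hstep1 : M.submatrix r σ = (N.submatrix r r) * ((A * K).submatrix r σ) := by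
      ext i j
      rw [hdec, mul_assoc]
      show (N * (A * K)) (r i) (σ j) = _
      rw [Matrix.mul_apply, Matrix.mul_apply]
      have hRHS : (∑ l : Fin k, (N.submatrix r r) i l * ((A * K).submatrix r σ) l j)
          = ∑ l ∈ Finset.univ.map ⟨r, hrmono.injective⟩, N (r i) l * (A * K) l (σ j) := by
        rw [Finset.sum_map]
        rfl
      rw [hRHS]
      refine (Finset.sum_subset (Finset.subset_univ _) ?_).symm
      intro x _ hx
      have hxlt : x.1 < n - k := by
        by_contra hge
        refine hx (Finset.mem_map.mpr ⟨⟨x.1 - (n - k), by omega⟩, Finset.mem_univ _, ?_⟩)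
        apply Fin.ext
        rw [Function.Embedding.coeFn_mk, hrval]
        simp
        omega
      rw [hN0 (r i) x (by rw [Fin.lt_def, hrval]; omega), zero_mul]
    have hdet1 : (N.submatrix r r).det = 1 := by
      have ht : (N.submatrix r r).BlockTriangular id := by
        intro i j hji
        exact hN0 _ _ (hrmono hji)
      rw [Matrix.det_of_upperTriangular ht]
      exact Finset.prod_eq_one (fun i _ => hNd (r i))
    have hstep3 : ((A * K).submatrix r σ)
        = Matrix.of (fun i j => A (r i) (r i) * (K.submatrix r σ) i j) := by
      ext i j
      rw [Matrix.submatrix_apply, hAK]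
      rfl
    have hprodr : (∏ i : Fin k, A (r i) (r i)) = y n / y (n - k) := by
      calc (∏ i : Fin k, A (r i) (r i))
          = ∏ i : Fin k, (fun t => y (n - k + t + 1) / y (n - k + t)) i.1 := by
            apply Finset.prod_congr rfl
            intro i _
            rw [hAy (r i), hrval i]
        _ = ∏ t ∈ Finset.range k, (y (n - k + t + 1) / y (n - k + t)) :=
            Fin.prod_univ_eq_prod_range (fun t => y (n - k + t + 1) / y (n - k + t)) k
        _ = y (n - k + k) / y (n - k) :=
            aux_tel y (n - k) k (fun j hj1 hj2 => hyne j (by omega))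
        _ = y n / y (n - k) := by rw [show n - k + k = n from by omega]
    rw [hstep1, Matrix.det_mul, hdet1, one_mul, hstep3, Matrix.det_mul_column, hprodr, hyn]
  -- norms
  have hyknz : y (n - k) ≠ 0 := hyne (n - k) (by omega)
  obtain ⟨hle, σ₀, hσ₀mono, hσ₀⟩ := aux_K K hK hKdet r hrmono
  have hnorm : ∀ σ : Fin k → Fin n,
      ‖(M.submatrix r σ).det‖₊ = ‖y (n - k)‖₊⁻¹ * ‖(K.submatrix r σ).det‖₊ := by
    intro σ
    rw [hfact σ, nnnorm_mul, one_div, nnnorm_inv]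
  have hsup : ((Finset.univ.filter fun σ : Fin k → Fin n =>
      ∀ a b : Fin k, a < b → σ a < σ b).sup fun σ =>
        ‖(M.submatrix r σ).det‖₊) = ‖y (n - k)‖₊⁻¹ := by
    apply le_antisymm
    · apply Finset.sup_le
      intro σ hσ
      rw [hnorm σ]
      calc ‖y (n - k)‖₊⁻¹ * ‖(K.submatrix r σ).det‖₊
          ≤ ‖y (n - k)‖₊⁻¹ * 1 := by
            apply mul_le_mul_right
            exact_mod_cast hle σ
        _ = ‖y (n - k)‖₊⁻¹ := mul_one _
    · have hmem : σ₀ ∈ (Finset.univ.filter fun σ : Fin k → Fin n =>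
          ∀ a b : Fin k, a < b → σ a < σ b) :=
        Finset.mem_filter.mpr ⟨Finset.mem_univ _, fun a b h => hσ₀mono h⟩
      have h7 := Finset.le_sup (f := fun σ => ‖(M.submatrix r σ).det‖₊) hmem
      have h8 : ‖(M.submatrix r σ₀).det‖₊ = ‖y (n - k)‖₊⁻¹ := by
        rw [hnorm σ₀]
        have h9 : ‖(K.submatrix r σ₀).det‖₊ = 1 := by
          ext
          rw [coe_nnnorm, hσ₀, NNReal.coe_one]
        rw [h9, mul_one]
      simpa only [h8] using h7
  rw [hsup, inv_inv]

open Finset in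
/-- Norms of the dilatons of an `SL(n, ℚ_p)` matrix: in any Iwasawa decomposition
`M = N·A·K` with dilatons `y`, the norm of `y_{n-k}` is the inverse of the maximal p-adic
norm of an anti-leading minor of `M` of order `k`. -/
theorem stmt_9 (p : ℕ) [Fact p.Prime] (n : ℕ)
    (M N A K : Matrix (Fin n) (Fin n) ℚ_[p])
    (hM : M.det = 1) (hdec : M = N * A * K)
    (hNd : ∀ i, N i i = 1) (hN0 : ∀ i j : Fin n, j < i → N i j = 0)
    (hA : ∀ i j : Fin n, i ≠ j → A i j = 0) (hAdet : A.det = 1)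
    (hK : ∀ i j, ‖K i j‖ ≤ 1) (hKdet : K.det = 1)
    (y : ℕ → ℚ_[p]) (hy0 : y 0 = 1) (hyn : y n = 1)
    (hAy : ∀ i : Fin n, A i i = y (i.1 + 1) / y i.1) :
    ∀ k : ℕ, (hk1 : 1 ≤ k) → (hk2 : k ≤ n - 1) →
      ‖y (n - k)‖₊ =
        ((Finset.univ.filter fun σ : Fin k → Fin n =>
            ∀ a b : Fin k, a < b → σ a < σ b).sup fun σ =>
          ‖(M.submatrix
              (fun i : Fin k => (⟨n - k + i.1, by have := i.2; omega⟩ : Fin n))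
              σ).det‖₊)⁻¹ := by
  intro k hk1 hk2
  exact stmt_aux p n M N A K hdec hNd hN0 hA hAdet hK hKdet y hy0 hyn hAy k hk1 hk2
    _ (fun i => rfl)
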